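/- For all real x with 0 < x < π/2, 3 + (3/20)·x^3·tan x < 2·(sin x/x) + (tan x)/x < 3 + (2/π)^4·x^3·tan x. -/

import Mathlib

set_option maxHeartbeats 4000000

open Real

private lemma mono_aux {f g : ℝ → ℝ} (hf : ∀ t : ℝ, HasDerivAt f (g t) t)
    (hg : ∀ t : ℝ, 0 < t → 0 ≤ g t) {y : ℝ} (hy : 0 ≤ y) : f 0 ≤ f y := by
  have hmono : MonotoneOn f (Set.Ici 0) := by
    apply monotoneOn_of_deriv_nonneg (convex_Ici 0)
    · exact fun t _ => ((hf t).differentiableAt.continuousAt).continuousWithinAt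
    · exact fun t _ => (hf t).differentiableAt.differentiableWithinAt
    · intro t ht
      rw [interior_Ici] at ht
      rw [(hf t).deriv]
      exact hg t ht
  exact hmono Set.self_mem_Ici hy hy

private lemma t2 (y : ℝ) (hy : 0 ≤ y) : 1 - y ^ 2 / 2 ≤ Real.cos y := by
  have h := mono_aux (f := fun t => Real.cos t - (1 - t ^ 2 / 2))
      (g := fun t => t - Real.sin t)
    (fun t => by
      have h2 : HasDerivAt (fun t : ℝ => 1 - t ^ 2 / 2) (-t) t := by
        have hb := ((hasDerivAt_pow 2 t).div_const 2).const_sub 1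
        refine hb.congr_deriv ?_
        push_cast; ring
      have h4 := (Real.hasDerivAt_cos t).sub h2
      refine h4.congr_deriv ?_
      ring)
    (fun t ht => by
      show (0:ℝ) ≤ t - Real.sin t
      linarith [Real.sin_le ht.le]) hy
  simp at h
  linarith
private lemma t3 (y : ℝ) (hy : 0 ≤ y) : y - y ^ 3 / 6 ≤ Real.sin y := by
  have h := mono_aux (f := fun t => Real.sin t - (t - t ^ 3 / 6))
      (g := fun t => Real.cos t - (1 - t ^ 2 / 2))
    (fun t => by
      have h2 : HasDerivAt (fun t : ℝ => t - t ^ 3 / 6) (1 - t ^ 2 / 2) t := by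
        have hb := ((hasDerivAt_id t).sub ((hasDerivAt_pow 3 t).div_const 6))
        refine hb.congr_deriv ?_
        push_cast; ring
      exact (Real.hasDerivAt_sin t).sub h2)
    (fun t ht => by
      have h3 := t2 t ht.le
      show (0:ℝ) ≤ Real.cos t - (1 - t ^ 2 / 2)
      linarith) hy
  simp at h
  linarith

private lemma t4 (y : ℝ) (hy : 0 ≤ y) : Real.cos y ≤ 1 - y ^ 2 / 2 + y ^ 4 / 24 := by
  have h := mono_aux (f := fun t => (1 - t ^ 2 / 2 + t ^ 4 / 24) - Real.cos t)
      (g := fun t => Real.sin t - (t - t ^ 3 / 6))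
    (fun t => by
      have h2 : HasDerivAt (fun t : ℝ => 1 - t ^ 2 / 2 + t ^ 4 / 24) (-(t - t ^ 3 / 6)) t := by
        have hb := (((hasDerivAt_const t (1:ℝ)).sub ((hasDerivAt_pow 2 t).div_const 2)).add ((hasDerivAt_pow 4 t).div_const 24))
        refine hb.congr_deriv ?_
        push_cast; ring
      have h4 := h2.sub (Real.hasDerivAt_cos t)
      refine h4.congr_deriv ?_
      ring)
    (fun t ht => by
      have h3 := t3 t ht.le
      show (0:ℝ) ≤ Real.sin t - (t - t ^ 3 / 6)
      linarith) hy
  simp at h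
  linarith

private lemma t5 (y : ℝ) (hy : 0 ≤ y) : Real.sin y ≤ y - y ^ 3 / 6 + y ^ 5 / 120 := by
  have h := mono_aux (f := fun t => (t - t ^ 3 / 6 + t ^ 5 / 120) - Real.sin t)
      (g := fun t => (1 - t ^ 2 / 2 + t ^ 4 / 24) - Real.cos t)
    (fun t => by
      have h2 : HasDerivAt (fun t : ℝ => t - t ^ 3 / 6 + t ^ 5 / 120) (1 - t ^ 2 / 2 + t ^ 4 / 24) t := by
        have hb := (((hasDerivAt_id t).sub ((hasDerivAt_pow 3 t).div_const 6)).add ((hasDerivAt_pow 5 t).div_const 120))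
        refine hb.congr_deriv ?_
        push_cast; ring
      exact h2.sub (Real.hasDerivAt_sin t))
    (fun t ht => by
      have h3 := t4 t ht.le
      show (0:ℝ) ≤ (1 - t ^ 2 / 2 + t ^ 4 / 24) - Real.cos t
      linarith) hy
  simp at h
  linarith

private lemma t6 (y : ℝ) (hy : 0 ≤ y) : 1 - y ^ 2 / 2 + y ^ 4 / 24 - y ^ 6 / 720 ≤ Real.cos y := by
  have h := mono_aux (f := fun t => Real.cos t - (1 - t ^ 2 / 2 + t ^ 4 / 24 - t ^ 6 / 720))
      (g := fun t => (t - t ^ 3 / 6 + t ^ 5 / 120) - Real.sin t)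
    (fun t => by
      have h2 : HasDerivAt (fun t : ℝ => 1 - t ^ 2 / 2 + t ^ 4 / 24 - t ^ 6 / 720) (-(t - t ^ 3 / 6 + t ^ 5 / 120)) t := by
        have hb := ((((hasDerivAt_const t (1:ℝ)).sub ((hasDerivAt_pow 2 t).div_const 2)).add ((hasDerivAt_pow 4 t).div_const 24)).sub ((hasDerivAt_pow 6 t).div_const 720))
        refine hb.congr_deriv ?_
        push_cast; ring
      have h4 := (Real.hasDerivAt_cos t).sub h2
      refine h4.congr_deriv ?_
      ring)
    (fun t ht => by
      have h3 := t5 t ht.le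
      show (0:ℝ) ≤ (t - t ^ 3 / 6 + t ^ 5 / 120) - Real.sin t
      linarith) hy
  simp at h
  linarith

private lemma t7 (y : ℝ) (hy : 0 ≤ y) : y - y ^ 3 / 6 + y ^ 5 / 120 - y ^ 7 / 5040 ≤ Real.sin y := by
  have h := mono_aux (f := fun t => Real.sin t - (t - t ^ 3 / 6 + t ^ 5 / 120 - t ^ 7 / 5040))
      (g := fun t => Real.cos t - (1 - t ^ 2 / 2 + t ^ 4 / 24 - t ^ 6 / 720))
    (fun t => by
      have h2 : HasDerivAt (fun t : ℝ => t - t ^ 3 / 6 + t ^ 5 / 120 - t ^ 7 / 5040) (1 - t ^ 2 / 2 + t ^ 4 / 24 - t ^ 6 / 720) t := by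
        have hb := ((((hasDerivAt_id t).sub ((hasDerivAt_pow 3 t).div_const 6)).add ((hasDerivAt_pow 5 t).div_const 120)).sub ((hasDerivAt_pow 7 t).div_const 5040))
        refine hb.congr_deriv ?_
        push_cast; ring
      exact (Real.hasDerivAt_sin t).sub h2)
    (fun t ht => by
      have h3 := t6 t ht.le
      show (0:ℝ) ≤ Real.cos t - (1 - t ^ 2 / 2 + t ^ 4 / 24 - t ^ 6 / 720)
      linarith) hy
  simp at h
  linarith

private lemma t8 (y : ℝ) (hy : 0 ≤ y) : Real.cos y ≤ 1 - y ^ 2 / 2 + y ^ 4 / 24 - y ^ 6 / 720 + y ^ 8 / 40320 := by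
  have h := mono_aux (f := fun t => (1 - t ^ 2 / 2 + t ^ 4 / 24 - t ^ 6 / 720 + t ^ 8 / 40320) - Real.cos t)
      (g := fun t => Real.sin t - (t - t ^ 3 / 6 + t ^ 5 / 120 - t ^ 7 / 5040))
    (fun t => by
      have h2 : HasDerivAt (fun t : ℝ => 1 - t ^ 2 / 2 + t ^ 4 / 24 - t ^ 6 / 720 + t ^ 8 / 40320) (-(t - t ^ 3 / 6 + t ^ 5 / 120 - t ^ 7 / 5040)) t := by
        have hb := (((((hasDerivAt_const t (1:ℝ)).sub ((hasDerivAt_pow 2 t).div_const 2)).add ((hasDerivAt_pow 4 t).div_const 24)).sub ((hasDerivAt_pow 6 t).div_const 720)).add ((hasDerivAt_pow 8 t).div_const 40320))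
        refine hb.congr_deriv ?_
        push_cast; ring
      have h4 := h2.sub (Real.hasDerivAt_cos t)
      refine h4.congr_deriv ?_
      ring)
    (fun t ht => by
      have h3 := t7 t ht.le
      show (0:ℝ) ≤ Real.sin t - (t - t ^ 3 / 6 + t ^ 5 / 120 - t ^ 7 / 5040)
      linarith) hy
  simp at h
  linarith

private lemma t9 (y : ℝ) (hy : 0 ≤ y) : Real.sin y ≤ y - y ^ 3 / 6 + y ^ 5 / 120 - y ^ 7 / 5040 + y ^ 9 / 362880 := by
  have h := mono_aux (f := fun t => (t - t ^ 3 / 6 + t ^ 5 / 120 - t ^ 7 / 5040 + t ^ 9 / 362880) - Real.sin t)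
      (g := fun t => (1 - t ^ 2 / 2 + t ^ 4 / 24 - t ^ 6 / 720 + t ^ 8 / 40320) - Real.cos t)
    (fun t => by
      have h2 : HasDerivAt (fun t : ℝ => t - t ^ 3 / 6 + t ^ 5 / 120 - t ^ 7 / 5040 + t ^ 9 / 362880) (1 - t ^ 2 / 2 + t ^ 4 / 24 - t ^ 6 / 720 + t ^ 8 / 40320) t := by
        have hb := (((((hasDerivAt_id t).sub ((hasDerivAt_pow 3 t).div_const 6)).add ((hasDerivAt_pow 5 t).div_const 120)).sub ((hasDerivAt_pow 7 t).div_const 5040)).add ((hasDerivAt_pow 9 t).div_const 362880))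
        refine hb.congr_deriv ?_
        push_cast; ring
      exact h2.sub (Real.hasDerivAt_sin t))
    (fun t ht => by
      have h3 := t8 t ht.le
      show (0:ℝ) ≤ (1 - t ^ 2 / 2 + t ^ 4 / 24 - t ^ 6 / 720 + t ^ 8 / 40320) - Real.cos t
      linarith) hy
  simp at h
  linarith

private lemma t10 (y : ℝ) (hy : 0 ≤ y) : 1 - y ^ 2 / 2 + y ^ 4 / 24 - y ^ 6 / 720 + y ^ 8 / 40320 - y ^ 10 / 3628800 ≤ Real.cos y := by
  have h := mono_aux (f := fun t => Real.cos t - (1 - t ^ 2 / 2 + t ^ 4 / 24 - t ^ 6 / 720 + t ^ 8 / 40320 - t ^ 10 / 3628800))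
      (g := fun t => (t - t ^ 3 / 6 + t ^ 5 / 120 - t ^ 7 / 5040 + t ^ 9 / 362880) - Real.sin t)
    (fun t => by
      have h2 : HasDerivAt (fun t : ℝ => 1 - t ^ 2 / 2 + t ^ 4 / 24 - t ^ 6 / 720 + t ^ 8 / 40320 - t ^ 10 / 3628800) (-(t - t ^ 3 / 6 + t ^ 5 / 120 - t ^ 7 / 5040 + t ^ 9 / 362880)) t := by
        have hb := ((((((hasDerivAt_const t (1:ℝ)).sub ((hasDerivAt_pow 2 t).div_const 2)).add ((hasDerivAt_pow 4 t).div_const 24)).sub ((hasDerivAt_pow 6 t).div_const 720)).add ((hasDerivAt_pow 8 t).div_const 40320)).sub ((hasDerivAt_pow 10 t).div_const 3628800))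
        refine hb.congr_deriv ?_
        push_cast; ring
      have h4 := (Real.hasDerivAt_cos t).sub h2
      refine h4.congr_deriv ?_
      ring)
    (fun t ht => by
      have h3 := t9 t ht.le
      show (0:ℝ) ≤ (t - t ^ 3 / 6 + t ^ 5 / 120 - t ^ 7 / 5040 + t ^ 9 / 362880) - Real.sin t
      linarith) hy
  simp at h
  linarith

private lemma t11 (y : ℝ) (hy : 0 ≤ y) : y - y ^ 3 / 6 + y ^ 5 / 120 - y ^ 7 / 5040 + y ^ 9 / 362880 - y ^ 11 / 39916800 ≤ Real.sin y := by
  have h := mono_aux (f := fun t => Real.sin t - (t - t ^ 3 / 6 + t ^ 5 / 120 - t ^ 7 / 5040 + t ^ 9 / 362880 - t ^ 11 / 39916800))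
      (g := fun t => Real.cos t - (1 - t ^ 2 / 2 + t ^ 4 / 24 - t ^ 6 / 720 + t ^ 8 / 40320 - t ^ 10 / 3628800))
    (fun t => by
      have h2 : HasDerivAt (fun t : ℝ => t - t ^ 3 / 6 + t ^ 5 / 120 - t ^ 7 / 5040 + t ^ 9 / 362880 - t ^ 11 / 39916800) (1 - t ^ 2 / 2 + t ^ 4 / 24 - t ^ 6 / 720 + t ^ 8 / 40320 - t ^ 10 / 3628800) t := by
        have hb := ((((((hasDerivAt_id t).sub ((hasDerivAt_pow 3 t).div_const 6)).add ((hasDerivAt_pow 5 t).div_const 120)).sub ((hasDerivAt_pow 7 t).div_const 5040)).add ((hasDerivAt_pow 9 t).div_const 362880)).sub ((hasDerivAt_pow 11 t).div_const 39916800))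
        refine hb.congr_deriv ?_
        push_cast; ring
      exact (Real.hasDerivAt_sin t).sub h2)
    (fun t ht => by
      have h3 := t10 t ht.le
      show (0:ℝ) ≤ Real.cos t - (1 - t ^ 2 / 2 + t ^ 4 / 24 - t ^ 6 / 720 + t ^ 8 / 40320 - t ^ 10 / 3628800)
      linarith) hy
  simp at h
  linarith


theorem stmt_10 (x : ℝ) (h1 : 0 < x) (h2 : x < π / 2) :
    3 + (3 / 20) * x ^ 3 * tan x < 2 * (sin x / x) + tan x / x ∧
      2 * (sin x / x) + tan x / x < 3 + (2 / π) ^ 4 * x ^ 3 * tan x := by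
  have hπ := Real.pi_gt_d6
  have hπ' := Real.pi_lt_d6
  have hπpos := Real.pi_pos
  have hxu : x < 1.57079655 := by linarith
  have hcos : 0 < cos x := Real.cos_pos_of_mem_Ioo ⟨by linarith, h2⟩
  have hsin : 0 < sin x := Real.sin_pos_of_pos_of_lt_pi h1 (by linarith)
  have hxc : 0 < x * cos x := mul_pos h1 hcos
  have hs2 : Real.sin (2*x) = 2 * Real.sin x * Real.cos x := Real.sin_two_mul x
  constructor
  · -- lower bound
    have hA := t11 (2*x) (by linarith)
    rw [hs2] at hA
    have hB := t11 x h1.le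
    have hCc := t8 x h1.le
    have hD := t9 x h1.le
    have hp1 : 0 ≤ 3*x*((1 - x^2/2 + x^4/24 - x^6/720 + x^8/40320) - Real.cos x) :=
      mul_nonneg (by linarith) (sub_nonneg.2 hCc)
    have hp2 : 0 ≤ 3/20*x^4*((x - x^3/6 + x^5/120 - x^7/5040 + x^9/362880) - Real.sin x) :=
      mul_nonneg (by positivity) (sub_nonneg.2 hD)
    have hQ : 0 < x^7/280 + x^9/11200 - 41*x^11/1900800 - x^13/2419200 := by
      have hu0 : 0 < x^2 := pow_pos h1 2
      have huU : x^2 ≤ 2.46741264 := by nlinarith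
      have h3 : (x^2)^2 ≤ 6.0882 := by nlinarith
      have h4 : (x^2)^3 ≤ 15.023 := by nlinarith
      have inner : 0 < 1/280 + x^2/11200 - 41*(x^2)^2/1900800 - (x^2)^3/2419200 := by linarith
      nlinarith [mul_pos (pow_pos h1 7) inner]
    have key : 0 < 2*sin x*cos x + sin x - 3*x*cos x - 3/20*x^4*sin x := by
      linarith [hA, hB, hp1, hp2, hQ]
    have hfac : 2*sin x*cos x + sin x - 3*x*cos x - 3/20*x^4*sin x
        = cos x * (2*sin x + tan x - 3*x - 3/20*x^4*tan x) := by
      linear_combination (3/20*x^4 - 1) * (Real.tan_mul_cos hcos.ne')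
    rw [hfac] at key
    have key'' : 0 < 2*sin x + tan x - 3*x - 3/20*x^4*tan x := by
      by_contra hcon
      push_neg at hcon
      nlinarith [key, hcos]
    have hL : 2 * (sin x / x) + tan x / x = (2*sin x + tan x)/x := by ring
    rw [hL, lt_div_iff₀ h1]
    nlinarith [key'']
  · -- upper bound
    have hπsqU : π^2 < 9.8696067 := by nlinarith
    have hπsqL : 9.8696002 < π^2 := by nlinarith [mul_pos (show (0:ℝ) < π - 3.141592 by linarith) (show (0:ℝ) < π - 3.141592 by linarith)]
    have hπ4U : π^4 < 97.4091358 := by nlinarith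
    have hπ4L : 97.408995 < π^4 := by nlinarith [mul_pos (show (0:ℝ) < π^2 - 9.8696002 by linarith) (show (0:ℝ) < π^2 - 9.8696002 by linarith)]
    have hClower : (164255/1000000 : ℝ) < (2/π)^4 := by
      rw [div_pow, lt_div_iff₀ (by positivity)]
      norm_num
      nlinarith
    have hCupper : (2/π)^4 < (164257/1000000 : ℝ) := by
      rw [div_pow, div_lt_iff₀ (by positivity)]
      norm_num
      nlinarith
    rcases le_or_gt x 1.4 with hx14 | hx14
    · -- left region
      have hA := t9 (2*x) (by linarith)
      rw [hs2] at hA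
      have hB := t9 x h1.le
      have hCc := t6 x h1.le
      have hD := t7 x h1.le
      have hq3 : 0 ≤ 3*x*(Real.cos x - (1 - x^2/2 + x^4/24 - x^6/720)) :=
        mul_nonneg (by linarith) (sub_nonneg.2 hCc)
      have hq1 : 0 ≤ ((2/π)^4 - 164255/1000000)*(x^4*Real.sin x) :=
        mul_nonneg (by linarith) (by positivity)
      have hq2 : 0 ≤ (164255/1000000)*x^4*(Real.sin x - (x - x^3/6 + x^5/120 - x^7/5040)) :=
        mul_nonneg (by positivity) (sub_nonneg.2 hD)
      have hR : 0 < 2851/200000*x^5 - 49957/8400000*x^7 - 7543/168000000*x^9 - 4693/144000000*x^11 := by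
        have hu0 : 0 < x^2 := pow_pos h1 2
        have huU : x^2 ≤ 1.96 := by nlinarith
        have h3 : (x^2)^2 ≤ 3.8416 := by nlinarith
        have h4 : (x^2)^3 ≤ 7.529537 := by nlinarith
        have inner : 0 < 2851/200000 - 49957/8400000*x^2 - 7543/168000000*(x^2)^2 - 4693/144000000*(x^2)^3 := by linarith
        nlinarith [mul_pos (pow_pos h1 5) inner]
      have key2 : 2*sin x*cos x + sin x - 3*x*cos x < (2/π)^4*x^4*sin x := by
        linarith [hA, hB, hq3, hq1, hq2, hR]
      have hfac : (2/π)^4*x^4*sin x - (2*sin x*cos x + sin x - 3*x*cos x)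
          = cos x * ((2/π)^4*x^4*tan x - (2*sin x + tan x - 3*x)) := by
        linear_combination ((1:ℝ) - (2/π)^4*x^4) * (Real.tan_mul_cos hcos.ne')
      have key2' : 0 < (2/π)^4*x^4*sin x - (2*sin x*cos x + sin x - 3*x*cos x) := by linarith
      rw [hfac] at key2'
      have key'' : 0 < (2/π)^4*x^4*tan x - (2*sin x + tan x - 3*x) := by
        by_contra hcon
        push_neg at hcon
        nlinarith [key2', hcos]
      have hL : 2 * (sin x / x) + tan x / x = (2*sin x + tan x)/x := by ring
      rw [hL, div_lt_iff₀ h1]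
      nlinarith [key'']
    · -- right region
      set t := π/2 - x with ht_def
      have ht0 : 0 < t := by simp [ht_def]; linarith
      have htu : t < π/2 := by rw [ht_def]; linarith
      have htan_t : t < Real.tan t := Real.lt_tan ht0 htu
      have htanx_pos : 0 < Real.tan x := Real.tan_pos_of_pos_of_lt_pi_div_two h1 h2
      have htx : Real.tan x = (Real.tan t)⁻¹ := by
        rw [ht_def, Real.tan_pi_div_two_sub, inv_inv]
      have htanx_lt : Real.tan x < t⁻¹ := by
        rw [htx]
        exact inv_strictAnti₀ ht0 htan_t
      have hC1 : (2/π)^4 * (π/2)^4 = 1 := by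
        rw [← mul_pow]
        have hone : (2/π)*(π/2) = 1 := by field_simp
        rw [hone]
        norm_num
      have h1C : 0 < 1 - (2/π)^4*x^4 := by
        have hx4 : x^4 < (π/2)^4 := by
          apply pow_lt_pow_left₀ h2 h1.le
          norm_num
        nlinarith [pow_pos (show (0:ℝ) < 2/π by positivity) 4]
      have hid : 1 - (2/π)^4*x^4 = (2/π)^4*t*((π/2+x)*((π/2)^2+x^2)) := by
        rw [ht_def]
        field_simp
        ring
      have step1 : Real.tan x * (1 - (2/π)^4*x^4) < (2/π)^4*((π/2+x)*((π/2)^2+x^2)) := by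
        calc Real.tan x * (1 - (2/π)^4*x^4) < t⁻¹ * (1 - (2/π)^4*x^4) := by
              apply mul_lt_mul_of_pos_right htanx_lt h1C
          _ = (2/π)^4*((π/2+x)*((π/2)^2+x^2)) := by
              rw [hid]
              field_simp
      have hfin : (2/π)^4*((π/2+x)*((π/2)^2+x^2)) < 3*x - 2 := by
        have hπ2 : π/2 < 1.5708 := by linarith
        have hπ2sq : (π/2)^2 < 2.4675 := by nlinarith
        have hxu' : x < 1.5708 := by linarith
        have hb : (π/2+x)*((π/2)^2+x^2) < (1.5708+x)*(2.4675+x^2) := by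
          calc (π/2+x)*((π/2)^2+x^2) ≤ (1.5708+x)*((π/2)^2+x^2) := by
                apply mul_le_mul_of_nonneg_right (by linarith)
                positivity
            _ < (1.5708+x)*(2.4675+x^2) := by
                apply mul_lt_mul_of_pos_left (by linarith)
                linarith
        have hbpos : 0 < (π/2+x)*((π/2)^2+x^2) := by positivity
        have hb2 : (2/π)^4*((π/2+x)*((π/2)^2+x^2)) < (164257/1000000)*((1.5708+x)*(2.4675+x^2)) := by
          calc (2/π)^4*((π/2+x)*((π/2)^2+x^2)) < (164257/1000000)*((π/2+x)*((π/2)^2+x^2)) :=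
                mul_lt_mul_of_pos_right hCupper hbpos
            _ < (164257/1000000)*((1.5708+x)*(2.4675+x^2)) := by
                apply mul_lt_mul_of_pos_left hb
                norm_num
        have hfin2 : (164257/1000000 : ℝ)*((1.5708+x)*(2.4675+x^2)) < 3*x - 2 := by
          nlinarith [mul_nonneg (sub_nonneg.2 hx14.le) (sub_nonneg.2 hxu'.le), sq_nonneg (x - 1.4), mul_nonneg (mul_nonneg (sub_nonneg.2 hx14.le) (sub_nonneg.2 hxu'.le)) (sub_nonneg.2 hx14.le)]
        linarith
      have hsin1 : Real.sin x ≤ 1 := Real.sin_le_one x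
      have key3 : 2*Real.sin x + Real.tan x < 3*x + (2/π)^4*x^4*Real.tan x := by
        linarith [step1, hfin, hsin1]
      have hL : 2 * (sin x / x) + tan x / x = (2*sin x + tan x)/x := by ring
      rw [hL, div_lt_iff₀ h1]
      nlinarith [key3]
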